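/- arXiv:2310.06483 — 6 statements merged into one kernel-verified Lean document; each statement's English description precedes it below -/
import Mathlib

section
/- Let H be a real inner product space, n ≥ 1, w, w* ∈ H, η > 0, and let g : Fin n → H → ℝ and u : Fin n → H satisfy, for every i and every v ∈ H, g i v ≥ g i w + ⟪u i, v − w⟫. Set L v = (1/n)·Σ_i g i v, ū = (1/n)·Σ_i u i, and V = (1/n)·Σ_i ‖u i − ū‖². Then (1/n)·Σ_i ‖(w − η•(u i)) − w*‖² − ‖w − w*‖² ≤ −2η·(L w − L w*) + η²·(V + ‖ū‖²). (Per-step expected form of the paper's Lemma 2, with expectation over a uniformly sampled buffer index made explicit as a finite average, and the second moment decomposed into variance plus squared mean.) -/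
open scoped RealInnerProductSpace BigOperators

/-- Per-step expected form of the paper's Lemma 2, with the expectation over a
uniformly sampled buffer index made explicit as a finite average, and the second
moment decomposed into variance plus squared mean. -/
theorem ogd_one_step_expected
    {H : Type*} [NormedAddCommGroup H] [InnerProductSpace ℝ H]
    (n : ℕ) (hn : 1 ≤ n) (w wstar : H) (η : ℝ) (hη : 0 < η)
    (g : Fin n → H → ℝ) (u : Fin n → H)
    (hsub : ∀ (i : Fin n) (v : H), g i v ≥ g i w + ⟪u i, v - w⟫)
    (L : H → ℝ) (hL : ∀ v, L v = (1 / (n : ℝ)) * ∑ i, g i v)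
    (ubar : H) (hu : ubar = (1 / (n : ℝ)) • ∑ i, u i)
    (V : ℝ) (hV : V = (1 / (n : ℝ)) * ∑ i, ‖u i - ubar‖ ^ 2) :
    (1 / (n : ℝ)) * ∑ i, ‖(w - η • u i) - wstar‖ ^ 2 - ‖w - wstar‖ ^ 2 ≤
      -2 * η * (L w - L wstar) + η ^ 2 * (V + ‖ubar‖ ^ 2) := by
  have hn0 : (0:ℝ) < (n:ℝ) := by exact_mod_cast hn
  have hsumu : ∑ i, u i = (n:ℝ) • ubar := by
    rw [hu, smul_smul]
    rw [mul_one_div, div_self hn0.ne', one_smul]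
  set a := w - wstar with ha
  -- pointwise expansion
  have hexp : ∀ i : Fin n, ‖(w - η • u i) - wstar‖ ^ 2
      = ‖a‖^2 - 2 * η * ⟪u i, a⟫ + η^2 * ‖u i‖^2 := by
    intro i
    have h1 : (w - η • u i) - wstar = a - η • u i := by rw [ha, sub_right_comm]
    rw [h1, norm_sub_sq_real, real_inner_smul_right, norm_smul, mul_pow,
      Real.norm_eq_abs, sq_abs, real_inner_comm]
    ring
  -- sum of inner products
  have hS1 : ∑ i, ⟪u i, a⟫ = (n:ℝ) * ⟪ubar, a⟫ := by
    rw [← sum_inner, hsumu, real_inner_smul_left]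
  have hS1' : ∑ i, ⟪u i, ubar⟫ = (n:ℝ) * ‖ubar‖^2 := by
    rw [← sum_inner, hsumu, real_inner_smul_left, real_inner_self_eq_norm_sq]
  -- variance decomposition
  have hS2 : ∑ i, ‖u i‖^2 = (n:ℝ) * V + (n:ℝ) * ‖ubar‖^2 := by
    have hvar : ∀ i : Fin n, ‖u i - ubar‖^2
        = ‖u i‖^2 - 2 * ⟪u i, ubar⟫ + ‖ubar‖^2 := by
      intro i; rw [norm_sub_sq_real]
    have : (n:ℝ) * V = ∑ i, ‖u i - ubar‖^2 := by
      rw [hV, ← mul_assoc, mul_one_div, div_self hn0.ne', one_mul]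
    rw [this]
    simp_rw [hvar]
    rw [Finset.sum_add_distrib, Finset.sum_sub_distrib, ← Finset.mul_sum, hS1',
      Finset.sum_const, Finset.card_univ, Fintype.card_fin, nsmul_eq_mul]
    ring
  -- convexity
  have hconv : L w - L wstar ≤ ⟪ubar, a⟫ := by
    have hsum : ∑ i, g i wstar ≥ ∑ i, (g i w + ⟪u i, wstar - w⟫) :=
      Finset.sum_le_sum fun i _ => hsub i wstar
    rw [Finset.sum_add_distrib] at hsum
    have hinner : ∑ i, ⟪u i, wstar - w⟫ = -((n:ℝ) * ⟪ubar, a⟫) := by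
      have : (wstar - w) = -a := by rw [ha]; abel
      simp_rw [this, inner_neg_right]
      rw [Finset.sum_neg_distrib, hS1]
    rw [hinner] at hsum
    have hLw : (n:ℝ) * L w = ∑ i, g i w := by
      rw [hL, ← mul_assoc, mul_one_div, div_self hn0.ne', one_mul]
    have hLws : (n:ℝ) * L wstar = ∑ i, g i wstar := by
      rw [hL, ← mul_assoc, mul_one_div, div_self hn0.ne', one_mul]
    nlinarith [hsum]
  -- total sum
  have htot : ∑ i, ‖(w - η • u i) - wstar‖ ^ 2
      = (n:ℝ) * ‖a‖^2 - 2 * η * ((n:ℝ) * ⟪ubar, a⟫)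
        + η^2 * ((n:ℝ) * V + (n:ℝ) * ‖ubar‖^2) := by
    simp_rw [hexp]
    rw [Finset.sum_add_distrib, Finset.sum_sub_distrib, Finset.sum_const,
      Finset.card_univ, Fintype.card_fin, nsmul_eq_mul, ← Finset.mul_sum,
      ← Finset.mul_sum, hS1, hS2]
  rw [htot]
  have h1n : (1 / (n:ℝ)) * (n:ℝ) = 1 := by field_simp
  have key : (1 / (n:ℝ)) * ((n:ℝ) * ‖a‖^2 - 2 * η * ((n:ℝ) * ⟪ubar, a⟫)
      + η^2 * ((n:ℝ) * V + (n:ℝ) * ‖ubar‖^2)) - ‖a‖^2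
      = -2 * η * ⟪ubar, a⟫ + η^2 * (V + ‖ubar‖^2) := by
    field_simp
    ring
  rw [key]
  nlinarith [hconv]
end

section
/- Let H be a real inner product space, M > 0, 0 < η ≤ 1/M, n ≥ 1, and w, w* ∈ H. Let g : Fin n → H → ℝ and u : Fin n → H satisfy, for every i and v, g i v ≥ g i w + ⟪u i, v − w⟫. Set L v = (1/n)·Σ_i g i v and ū = (1/n)·Σ_i u i, and assume L and a map G : H → H satisfy: for all a, b ∈ H, L b ≤ L a + ⟪G a, b − a⟫ + (M/2)·‖b − a‖², with G w = ū. Then (1/n)·Σ_i L (w − η•(u i)) − L w* ≤ (‖w − w*‖² − (1/n)·Σ_i ‖(w − η•(u i)) − w*‖²)/(2η) + η·(1/n)·Σ_i ‖u i − ū‖². (Per-step inequality in the paper's proof of Theorem 5: combining the convexity step and the smooth descent step, with step size η ≤ 1/M, the second-moment term reduces to the variance of the stochastic gradient.) -/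
open scoped RealInnerProductSpace BigOperators

/-- Per-step inequality in the paper's proof of Theorem 5: combining the convexity
step and the smooth descent step, with step size `η ≤ 1/M`, the second-moment term
reduces to the variance of the stochastic gradient. -/
theorem per_step_variance_inequality
    {H : Type*} [NormedAddCommGroup H] [InnerProductSpace ℝ H]
    (M : ℝ) (hM : 0 < M) (η : ℝ) (hη : 0 < η) (hηM : η ≤ 1 / M)
    (n : ℕ) (hn : 1 ≤ n) (w wstar : H)
    (g : Fin n → H → ℝ) (u : Fin n → H)
    (hsub : ∀ (i : Fin n) (v : H), g i v ≥ g i w + ⟪u i, v - w⟫)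
    (L : H → ℝ) (hL : ∀ v, L v = (1 / (n : ℝ)) * ∑ i, g i v)
    (ubar : H) (hu : ubar = (1 / (n : ℝ)) • ∑ i, u i)
    (G : H → H)
    (hsmooth : ∀ a b : H, L b ≤ L a + ⟪G a, b - a⟫ + (M / 2) * ‖b - a‖ ^ 2)
    (hGw : G w = ubar) :
    (1 / (n : ℝ)) * ∑ i, L (w - η • u i) - L wstar ≤
      (‖w - wstar‖ ^ 2 - (1 / (n : ℝ)) * ∑ i, ‖(w - η • u i) - wstar‖ ^ 2) / (2 * η)
        + η * ((1 / (n : ℝ)) * ∑ i, ‖u i - ubar‖ ^ 2) := by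
  have hN : (0:ℝ) < n := by exact_mod_cast Nat.lt_of_lt_of_le Nat.zero_lt_one hn
  have hN' : (n:ℝ) ≠ 0 := ne_of_gt hN
  set N : ℝ := (n:ℝ)
  set S : ℝ := ∑ i, ‖u i‖ ^ 2 with hSdef
  set P : ℝ := ⟪ubar, w - wstar⟫ with hPdef
  set B : ℝ := ‖ubar‖ ^ 2 with hBdef
  have hsumu : ∑ i, u i = N • ubar := by
    rw [hu, smul_smul, mul_one_div, div_self hN', one_smul]
  -- sum of inner products with w - wstar
  have hA : ∑ i, ⟪u i, w - wstar⟫ = N * P := by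
    rw [hPdef, ← sum_inner, hsumu, real_inner_smul_left]
  have hB2 : ∑ i, ⟪ubar, u i⟫ = N * B := by
    rw [hBdef, ← inner_sum, hsumu, real_inner_smul_right,
      real_inner_self_eq_norm_sq]
  have hB3 : ∑ i, ⟪u i, ubar⟫ = N * B := by
    rw [← hB2]; exact Finset.sum_congr rfl fun i _ => real_inner_comm _ _
  -- variance identity
  have hC : ∑ i, ‖u i - ubar‖ ^ 2 = S - N * B := by
    have : ∀ i : Fin n, ‖u i - ubar‖ ^ 2 = ‖u i‖ ^ 2 - 2 * ⟪u i, ubar⟫ + B := by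
      intro i; rw [hBdef, @norm_sub_sq_real]
    rw [Finset.sum_congr rfl fun i _ => this i]
    rw [Finset.sum_add_distrib, Finset.sum_sub_distrib, ← Finset.mul_sum, hB3,
      Finset.sum_const, Finset.card_univ, Fintype.card_fin, nsmul_eq_mul]
    ring
  -- distance identity
  have hD : ∑ i, ‖(w - η • u i) - wstar‖ ^ 2
      = N * ‖w - wstar‖ ^ 2 - 2 * η * (N * P) + η ^ 2 * S := by
    have : ∀ i : Fin n, ‖(w - η • u i) - wstar‖ ^ 2
        = ‖w - wstar‖ ^ 2 - 2 * η * ⟪u i, w - wstar⟫ + η ^ 2 * ‖u i‖ ^ 2 := by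
      intro i
      have h1 : (w - η • u i) - wstar = (w - wstar) - η • u i := by abel
      rw [h1, @norm_sub_sq_real, real_inner_smul_right, norm_smul, mul_pow,
        real_inner_comm, Real.norm_eq_abs, abs_of_pos hη]
      ring
    rw [Finset.sum_congr rfl fun i _ => this i]
    rw [Finset.sum_add_distrib, Finset.sum_sub_distrib, ← Finset.mul_sum, hA,
      ← Finset.mul_sum, Finset.sum_const, Finset.card_univ, Fintype.card_fin,
      nsmul_eq_mul]
  -- smoothness step, summed
  have hE : ∑ i, L (w - η • u i) ≤ N * L w - η * (N * B) + (M / 2) * η ^ 2 * S := by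
    have hper : ∀ i : Fin n, L (w - η • u i)
        ≤ L w - η * ⟪ubar, u i⟫ + (M / 2) * η ^ 2 * ‖u i‖ ^ 2 := by
      intro i
      have := hsmooth w (w - η • u i)
      rw [hGw] at this
      have h1 : (w - η • u i) - w = -(η • u i) := by abel
      rw [h1, inner_neg_right, real_inner_smul_right, norm_neg, norm_smul,
        mul_pow, Real.norm_eq_abs, abs_of_pos hη] at this
      nlinarith [this]
    calc ∑ i, L (w - η • u i)
        ≤ ∑ i, (L w - η * ⟪ubar, u i⟫ + (M / 2) * η ^ 2 * ‖u i‖ ^ 2) :=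
          Finset.sum_le_sum fun i _ => hper i
      _ = N * L w - η * (N * B) + (M / 2) * η ^ 2 * S := by
          rw [Finset.sum_add_distrib, Finset.sum_sub_distrib, ← Finset.mul_sum, hB2,
            ← Finset.mul_sum, Finset.sum_const, Finset.card_univ, Fintype.card_fin,
            nsmul_eq_mul]
  -- convexity step
  have hF : N * L w - N * P ≤ N * L wstar := by
    have h1 : ∑ i, g i wstar ≥ ∑ i, (g i w + ⟪u i, wstar - w⟫) :=
      Finset.sum_le_sum fun i _ => hsub i wstar
    rw [Finset.sum_add_distrib] at h1
    have h2 : ∑ i, ⟪u i, wstar - w⟫ = -(N * P) := by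
      rw [← hA, ← Finset.sum_neg_distrib]
      exact Finset.sum_congr rfl fun i _ => by
        rw [← inner_neg_right]; congr 1; abel
    have hw : N * L w = ∑ i, g i w := by rw [hL]; field_simp
    have hws : N * L wstar = ∑ i, g i wstar := by rw [hL]; field_simp
    rw [hw, hws]; linarith [h1, h2.symm ▸ h1]
  have hS0 : (0:ℝ) ≤ S := Finset.sum_nonneg fun i _ => by positivity
  have hMη : M * η ≤ 1 := by
    rw [le_div_iff₀ hM] at hηM; linarith
  have hkey : (M / 2) * η ^ 2 * S ≤ (η / 2) * S := by
    nlinarith [mul_nonneg (mul_nonneg (sub_nonneg.mpr hMη) hη.le) hS0]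
  -- combine
  have hcomb : ∑ i, L (w - η • u i)
      ≤ N * L wstar + N * P - η * (N * B) + (η / 2) * S := by linarith
  rw [hC, hD]
  have hrhs : (‖w - wstar‖ ^ 2 - 1 / N * (N * ‖w - wstar‖ ^ 2 - 2 * η * (N * P) + η ^ 2 * S)) / (2 * η)
      + η * (1 / N * (S - N * B)) = P + η * S / (2 * N) - η * B := by
    field_simp
    ring
  rw [hrhs]
  have hmul := mul_le_mul_of_nonneg_left hcomb (le_of_lt (one_div_pos.mpr hN))
  have hexp : 1 / N * (N * L wstar + N * P - η * (N * B) + (η / 2) * S)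
      = L wstar + P - η * B + η * S / (2 * N) := by field_simp
  rw [hexp] at hmul
  linarith
end

section
/- Let H be a real inner product space, M > 0, 0 < η ≤ 1/M, T ≥ 1, w* ∈ H, and for each t ∈ Fin T let n t ≥ 1, g t : Fin (n t) → H → ℝ, u t : H → Fin (n t) → H, and G t : H → H satisfy: (i) for all w, i, v: g t i v ≥ g t i w + ⟪u t w i, v − w⟫; (ii) with L t w = (1/(n t))·Σ_i g t i w, for all a, b: L t b ≤ L t a + ⟪G t a, b − a⟫ + (M/2)·‖b − a‖²; (iii) for all w: (1/(n t))·Σ_i u t w i = G t w. Let Ω = Π_{t} Fin (n t) with the uniform average, and define W σ 0 = 0 and W σ (t+1) = W σ t − η•(u t (W σ t) (σ t)). Then (1/|Ω|)·Σ_{σ∈Ω} Σ_{t} (L t (W σ (t+1)) − L t w*) ≤ ‖w*‖²/(2η) + η·(1/|Ω|)·Σ_{σ∈Ω} Σ_{t} V t σ, where V t σ = (1/(n t))·Σ_i ‖u t (W σ t) i − G t (W σ t)‖². (Paper's Theorem 5: with convex, M-smooth local losses, unbiased buffer gradients, and step size η ∈ (0, 1/M], buffer-based online gradient descent achieves expected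 regret at most ‖w̄*‖²/(2η) plus η times the sum of the stochastic-gradient variances.) -/
open scoped RealInnerProductSpace BigOperators

lemma cond_avg {T : ℕ} {n : Fin T → ℕ} (t : Fin T)
    (Φ : ((s : Fin T) → Fin (n s)) → Fin (n t) → ℝ)
    (hΦ : ∀ σ (j' : Fin (n t)) j, Φ (Function.update σ t j') j = Φ σ j) :
    (n t : ℝ) * ∑ σ : (s : Fin T) → Fin (n s), Φ σ (σ t)
      = ∑ σ : (s : Fin T) → Fin (n s), ∑ j, Φ σ j := by
  classical
  set e := Equiv.piSplitAt t (fun s => Fin (n s)) with he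
  have hupd : ∀ (j j' : Fin (n t)) (ρ : (s : {s // s ≠ t}) → Fin (n s)),
      e.symm (j', ρ) = Function.update (e.symm (j, ρ)) t j' := by
    intro j j' ρ
    funext s
    by_cases h : s = t
    · subst h; simp [he, Equiv.piSplitAt]
    · simp [he, Equiv.piSplitAt, h, Function.update_of_ne h]
  have hind : ∀ (j j' : Fin (n t)) ρ (k : Fin (n t)),
      Φ (e.symm (j', ρ)) k = Φ (e.symm (j, ρ)) k := by
    intro j j' ρ k
    rw [hupd j j' ρ, hΦ]
  have hat : ∀ (j : Fin (n t)) ρ, (e.symm (j, ρ)) t = j := by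
    intro j ρ; simp [he, Equiv.piSplitAt]
  have h1 : ∑ σ : (s : Fin T) → Fin (n s), Φ σ (σ t)
      = ∑ p : Fin (n t) × ((s : {s // s ≠ t}) → Fin (n s)), Φ (e.symm p) ((e.symm p) t) :=
    (Equiv.sum_comp e.symm (fun σ => Φ σ (σ t))).symm
  have h2 : ∑ σ : (s : Fin T) → Fin (n s), ∑ j, Φ σ j
      = ∑ p : Fin (n t) × ((s : {s // s ≠ t}) → Fin (n s)), ∑ j, Φ (e.symm p) j :=
    (Equiv.sum_comp e.symm (fun σ => ∑ j, Φ σ j)).symm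
  rw [h1, h2, Fintype.sum_prod_type, Fintype.sum_prod_type]
  simp only [hat]
  have hR : ∀ j' : Fin (n t),
      (∑ ρ : (s : {s // s ≠ t}) → Fin (n s), ∑ j, Φ (e.symm (j', ρ)) j)
        = ∑ ρ : (s : {s // s ≠ t}) → Fin (n s), ∑ j, Φ (e.symm (j, ρ)) j := fun j' =>
    Finset.sum_congr rfl fun ρ _ => Finset.sum_congr rfl fun j _ => hind j j' ρ j
  rw [Finset.sum_congr rfl (fun j' _ => hR j'), Finset.sum_const, Finset.sum_comm,
    nsmul_eq_mul, Finset.card_univ, Fintype.card_fin]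


/-- Paper's Theorem 5: with convex, `M`-smooth local losses, unbiased buffer
gradients, and step size `η ∈ (0, 1/M]`, buffer-based online gradient descent
achieves expected regret at most `‖w*‖²/(2η)` plus `η` times the sum of the
stochastic-gradient variances.  Expectations over the independent uniform buffer
samples are encoded as the uniform average over the finite product sample space
`Ω = Π t, Fin (n t)`. -/
theorem buffer_ogd_regret_variance
    {H : Type*} [NormedAddCommGroup H] [InnerProductSpace ℝ H]
    (M : ℝ) (hM : 0 < M) (η : ℝ) (hη : 0 < η) (hηM : η ≤ 1 / M)
    (T : ℕ) (hT : 1 ≤ T) (wstar : H)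
    (n : Fin T → ℕ) (hn : ∀ t, 1 ≤ n t)
    (g : (t : Fin T) → Fin (n t) → H → ℝ)
    (u : (t : Fin T) → H → Fin (n t) → H)
    (G : Fin T → H → H)
    (hsub : ∀ (t : Fin T) (w : H) (i : Fin (n t)) (v : H),
      g t i v ≥ g t i w + ⟪u t w i, v - w⟫)
    (L : Fin T → H → ℝ)
    (hL : ∀ t w, L t w = (1 / (n t : ℝ)) * ∑ i, g t i w)
    (hsmooth : ∀ (t : Fin T) (a b : H),
      L t b ≤ L t a + ⟪G t a, b - a⟫ + (M / 2) * ‖b - a‖ ^ 2)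
    (hunbiased : ∀ (t : Fin T) (w : H), (1 / (n t : ℝ)) • ∑ i, u t w i = G t w)
    (W : ((t : Fin T) → Fin (n t)) → Fin (T + 1) → H)
    (hW0 : ∀ σ, W σ 0 = 0)
    (hWsucc : ∀ (σ : (t : Fin T) → Fin (n t)) (t : Fin T),
      W σ t.succ = W σ t.castSucc - η • u t (W σ t.castSucc) (σ t))
    (V : Fin T → ((t : Fin T) → Fin (n t)) → ℝ)
    (hV : ∀ t σ, V t σ =
      (1 / (n t : ℝ)) * ∑ i, ‖u t (W σ t.castSucc) i - G t (W σ t.castSucc)‖ ^ 2) :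
    (1 / (Fintype.card ((t : Fin T) → Fin (n t)) : ℝ)) *
        ∑ σ : (t : Fin T) → Fin (n t), ∑ t : Fin T,
          (L t (W σ t.succ) - L t wstar) ≤
      ‖wstar‖ ^ 2 / (2 * η) +
        η * ((1 / (Fintype.card ((t : Fin T) → Fin (n t)) : ℝ)) *
          ∑ σ : (t : Fin T) → Fin (n t), ∑ t : Fin T, V t σ) := by
  classical
  have hnR : ∀ t : Fin T, (n t : ℝ) ≠ 0 := fun t =>
    Nat.cast_ne_zero.mpr (Nat.one_le_iff_ne_zero.mp (hn t))
  have hMη : M * η ≤ 1 := by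
    rw [le_div_iff₀ hM] at hηM; linarith
  -- W σ r depends only on coordinates s with s.succ ≤ r
  have Wind : ∀ (r : Fin (T + 1)) (σ σ' : (t : Fin T) → Fin (n t)),
      (∀ s : Fin T, s.succ ≤ r → σ s = σ' s) → W σ r = W σ' r := by
    intro r
    induction r using Fin.induction with
    | zero => intro σ σ' _; rw [hW0, hW0]
    | succ i ih =>
      intro σ σ' h
      have hi : σ i = σ' i := h i le_rfl
      have hc : W σ i.castSucc = W σ' i.castSucc :=
        ih σ σ' fun s hs => h s (le_trans hs (Fin.castSucc_le_succ i))
      rw [hWsucc, hWsucc, hi, hc]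
  have hWinv : ∀ (t : Fin T) (σ : (s : Fin T) → Fin (n s)) (j' : Fin (n t)),
      W (Function.update σ t j') t.castSucc = W σ t.castSucc := by
    intro t σ j'
    refine Wind _ _ _ fun s hs => ?_
    have hst : s ≠ t := by
      have h1 : (s : ℕ) + 1 ≤ (t : ℕ) := hs
      intro e; rw [e] at h1; omega
    exact Function.update_of_ne hst _ _
  -- pointwise inequality
  have key : ∀ (σ : (s : Fin T) → Fin (n s)) (t : Fin T),
      L t (W σ t.succ) - L t wstar ≤
        (‖W σ t.castSucc - wstar‖ ^ 2 - ‖W σ t.succ - wstar‖ ^ 2) / (2 * η)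
          + η * ‖u t (W σ t.castSucc) (σ t) - G t (W σ t.castSucc)‖ ^ 2
          + (η * ⟪u t (W σ t.castSucc) (σ t) - G t (W σ t.castSucc), G t (W σ t.castSucc)⟫
             + ⟪G t (W σ t.castSucc) - u t (W σ t.castSucc) (σ t), W σ t.castSucc - wstar⟫) := by
    intro σ t
    set w := W σ t.castSucc with hw
    set uu := u t w (σ t) with huu
    set gg := G t w with hgg
    have hw' : W σ t.succ = w - η • uu := hWsucc σ t
    -- smoothness
    have Fsm : L t (W σ t.succ) ≤ L t w - η * ⟪gg, uu⟫ + M / 2 * (η ^ 2 * ‖uu‖ ^ 2) := by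
      have h := hsmooth t w (W σ t.succ)
      have hd : W σ t.succ - w = -(η • uu) := by rw [hw']; abel
      rw [hd, inner_neg_right, real_inner_smul_right, norm_neg, norm_smul,
        Real.norm_eq_abs, abs_of_pos hη, mul_pow] at h
      linarith
    -- convexity
    have Fcv : L t w ≤ L t wstar + ⟪gg, w - wstar⟫ := by
      have hsum : ∑ i, (g t i w + ⟪u t w i, wstar - w⟫) ≤ ∑ i, g t i wstar :=
        Finset.sum_le_sum fun i _ => hsub t w i wstar
      rw [Finset.sum_add_distrib, ← sum_inner] at hsum
      have hGin : ⟪gg, wstar - w⟫ = (1 / (n t : ℝ)) * ⟪∑ i, u t w i, wstar - w⟫ := by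
        rw [hgg, ← hunbiased t w, real_inner_smul_left]
      have hmul := mul_le_mul_of_nonneg_left hsum
        (by positivity : (0:ℝ) ≤ 1 / (n t : ℝ))
      rw [mul_add] at hmul
      have h1 : ⟪gg, w - wstar⟫ = -⟪gg, wstar - w⟫ := by
        rw [← inner_neg_right, neg_sub]
      rw [hL t w, hL t wstar, h1, hGin]
      linarith
    -- distance identity
    have Fdist : ‖W σ t.succ - wstar‖ ^ 2
        = ‖w - wstar‖ ^ 2 - 2 * (η * ⟪w - wstar, uu⟫) + η ^ 2 * ‖uu‖ ^ 2 := by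
      have hd : W σ t.succ - wstar = (w - wstar) - η • uu := by rw [hw']; abel
      rw [hd, norm_sub_sq_real, real_inner_smul_right, norm_smul,
        Real.norm_eq_abs, abs_of_pos hη, mul_pow]
    have Fvar : ‖uu - gg‖ ^ 2 = ‖uu‖ ^ 2 - 2 * ⟪uu, gg⟫ + ‖gg‖ ^ 2 := norm_sub_sq_real uu gg
    have Fi1 : ⟪uu - gg, gg⟫ = ⟪uu, gg⟫ - ‖gg‖ ^ 2 := by
      rw [inner_sub_left, real_inner_self_eq_norm_sq]
    have Fi2 : ⟪gg - uu, w - wstar⟫ = ⟪gg, w - wstar⟫ - ⟪uu, w - wstar⟫ := inner_sub_left gg uu _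
    have Fi3 : ⟪w - wstar, uu⟫ = ⟪uu, w - wstar⟫ := real_inner_comm _ _
    have ha : (0:ℝ) ≤ ‖uu‖ ^ 2 := sq_nonneg _
    rw [Fi3] at Fdist
    have Fdiv : (‖w - wstar‖ ^ 2 - ‖W σ t.succ - wstar‖ ^ 2) / (2 * η)
        = ⟪uu, w - wstar⟫ - η / 2 * ‖uu‖ ^ 2 := by
      rw [Fdist]; field_simp; ring
    rw [Fvar, Fi1, Fi2, Fdiv]
    have Fi4 : ⟪gg, uu⟫ = ⟪uu, gg⟫ := real_inner_comm _ _
    rw [Fi4] at Fsm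
    nlinarith [Fsm, Fcv, ha, mul_nonneg (mul_nonneg hη.le (sub_nonneg.mpr hMη)) ha]
  -- sum of stochastic gradients
  have husum : ∀ (t : Fin T) (w : H), ∑ i, u t w i = (n t : ℝ) • G t w := by
    intro t w
    rw [← hunbiased t w, smul_smul, mul_one_div, div_self (hnR t), one_smul]
  -- averaged cross terms vanish
  have Sphi : ∀ t : Fin T,
      (∑ σ : (s : Fin T) → Fin (n s),
        (η * ⟪u t (W σ t.castSucc) (σ t) - G t (W σ t.castSucc), G t (W σ t.castSucc)⟫
          + ⟪G t (W σ t.castSucc) - u t (W σ t.castSucc) (σ t), W σ t.castSucc - wstar⟫)) = 0 := by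
    intro t
    have hinv : ∀ (σ : (s : Fin T) → Fin (n s)) (j' j : Fin (n t)),
        (fun (σ : (s : Fin T) → Fin (n s)) (j : Fin (n t)) =>
          η * ⟪u t (W σ t.castSucc) j - G t (W σ t.castSucc), G t (W σ t.castSucc)⟫
            + ⟪G t (W σ t.castSucc) - u t (W σ t.castSucc) j, W σ t.castSucc - wstar⟫)
          (Function.update σ t j') j
        = (fun (σ : (s : Fin T) → Fin (n s)) (j : Fin (n t)) =>
          η * ⟪u t (W σ t.castSucc) j - G t (W σ t.castSucc), G t (W σ t.castSucc)⟫
            + ⟪G t (W σ t.castSucc) - u t (W σ t.castSucc) j, W σ t.castSucc - wstar⟫) σ j := by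
      intro σ j' j
      simp only [hWinv]
    have h := cond_avg (n := n) t
      (fun (σ : (s : Fin T) → Fin (n s)) (j : Fin (n t)) =>
        η * ⟪u t (W σ t.castSucc) j - G t (W σ t.castSucc), G t (W σ t.castSucc)⟫
          + ⟪G t (W σ t.castSucc) - u t (W σ t.castSucc) j, W σ t.castSucc - wstar⟫) hinv
    have hzero : ∀ σ : (s : Fin T) → Fin (n s),
        (∑ j, (η * ⟪u t (W σ t.castSucc) j - G t (W σ t.castSucc), G t (W σ t.castSucc)⟫
          + ⟪G t (W σ t.castSucc) - u t (W σ t.castSucc) j, W σ t.castSucc - wstar⟫)) = 0 := by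
      intro σ
      set w := W σ t.castSucc with hw
      have hs1 : ∑ j : Fin (n t), (u t w j - G t w) = 0 := by
        rw [Finset.sum_sub_distrib, husum t w, Finset.sum_const, Finset.card_univ,
          Fintype.card_fin, sub_eq_zero, Nat.cast_smul_eq_nsmul]
      have hs2 : ∑ j : Fin (n t), (G t w - u t w j) = 0 := by
        have h2 : ∑ j : Fin (n t), (G t w - u t w j) = -∑ j : Fin (n t), (u t w j - G t w) := by
          rw [← Finset.sum_neg_distrib]
          exact Finset.sum_congr rfl fun j _ => (neg_sub _ _).symm
        rw [h2, hs1, neg_zero]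
      rw [Finset.sum_add_distrib, ← Finset.mul_sum, ← sum_inner, ← sum_inner, hs1, hs2,
        inner_zero_left, inner_zero_left, mul_zero, add_zero]
    rw [Finset.sum_congr rfl (fun σ _ => hzero σ), Finset.sum_const, smul_zero] at h
    exact (mul_eq_zero.mp h).resolve_left (hnR t)
  -- averaged variance term
  have Spsi : ∀ t : Fin T,
      (∑ σ : (s : Fin T) → Fin (n s), ‖u t (W σ t.castSucc) (σ t) - G t (W σ t.castSucc)‖ ^ 2)
        = ∑ σ : (s : Fin T) → Fin (n s), V t σ := by
    intro t
    have hinv : ∀ (σ : (s : Fin T) → Fin (n s)) (j' j : Fin (n t)),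
        (fun (σ : (s : Fin T) → Fin (n s)) (j : Fin (n t)) =>
            ‖u t (W σ t.castSucc) j - G t (W σ t.castSucc)‖ ^ 2) (Function.update σ t j') j
        = (fun (σ : (s : Fin T) → Fin (n s)) (j : Fin (n t)) =>
            ‖u t (W σ t.castSucc) j - G t (W σ t.castSucc)‖ ^ 2) σ j := by
      intro σ j' j
      simp only [hWinv]
    have h := cond_avg (n := n) t
      (fun (σ : (s : Fin T) → Fin (n s)) (j : Fin (n t)) =>
        ‖u t (W σ t.castSucc) j - G t (W σ t.castSucc)‖ ^ 2) hinv
    have hnV : ∀ σ : (s : Fin T) → Fin (n s),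
        (∑ j, ‖u t (W σ t.castSucc) j - G t (W σ t.castSucc)‖ ^ 2) = (n t : ℝ) * V t σ := by
      intro σ
      rw [hV, ← mul_assoc, mul_one_div, div_self (hnR t), one_mul]
    rw [Finset.sum_congr rfl (fun σ _ => hnV σ), ← Finset.mul_sum] at h
    exact mul_left_cancel₀ (hnR t) h
  -- telescoping
  have Stel : ∀ σ : (s : Fin T) → Fin (n s),
      (∑ t : Fin T, (‖W σ t.castSucc - wstar‖ ^ 2 - ‖W σ t.succ - wstar‖ ^ 2))
        ≤ ‖wstar‖ ^ 2 := by
    intro σ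
    set f : ℕ → ℝ := fun i => if h : i < T + 1 then ‖W σ ⟨i, h⟩ - wstar‖ ^ 2 else 0 with hf
    have hterm : ∀ t : Fin T,
        ‖W σ t.castSucc - wstar‖ ^ 2 - ‖W σ t.succ - wstar‖ ^ 2
          = f (t : ℕ) - f ((t : ℕ) + 1) := by
      intro t
      have h1 : ((t : ℕ) : ℕ) < T + 1 := Nat.lt_succ_of_lt t.2
      have h2 : (t : ℕ) + 1 < T + 1 := Nat.succ_lt_succ t.2
      rw [hf]
      simp only [dif_pos h1, dif_pos h2]
      congr 2
    have hsum : (∑ t : Fin T, (‖W σ t.castSucc - wstar‖ ^ 2 - ‖W σ t.succ - wstar‖ ^ 2))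
        = f 0 - f T := by
      rw [Finset.sum_congr rfl (fun t _ => hterm t)]
      rw [Fin.sum_univ_eq_sum_range (fun i => f i - f (i + 1)) T]
      exact Finset.sum_range_sub' f T
    rw [hsum]
    have hf0 : f 0 = ‖wstar‖ ^ 2 := by
      rw [hf]
      simp only [dif_pos (Nat.succ_pos T)]
      have : W σ (⟨0, Nat.succ_pos T⟩ : Fin (T + 1)) = 0 := hW0 σ
      rw [this, zero_sub, norm_neg]
    have hfT : 0 ≤ f T := by
      rw [hf]
      simp only [dif_pos (Nat.lt_succ_self T)]
      positivity
    linarith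
  -- combine everything
  have hNE : Nonempty ((t : Fin T) → Fin (n t)) := ⟨fun t => ⟨0, hn t⟩⟩
  set N : ℕ := Fintype.card ((t : Fin T) → Fin (n t)) with hNdef
  have hNpos : 0 < (N : ℝ) := Nat.cast_pos.mpr Fintype.card_pos
  set Ssum : ℝ := ∑ σ : (t : Fin T) → Fin (n t), ∑ t : Fin T, V t σ with hSsum
  have main : (∑ σ : (s : Fin T) → Fin (n s), ∑ t : Fin T, (L t (W σ t.succ) - L t wstar))
      ≤ (N : ℝ) * (‖wstar‖ ^ 2 / (2 * η)) + η * Ssum := by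
    have step1 : (∑ σ : (s : Fin T) → Fin (n s), ∑ t : Fin T, (L t (W σ t.succ) - L t wstar))
        ≤ ∑ σ : (s : Fin T) → Fin (n s), ∑ t : Fin T,
            ((‖W σ t.castSucc - wstar‖ ^ 2 - ‖W σ t.succ - wstar‖ ^ 2) / (2 * η)
              + η * ‖u t (W σ t.castSucc) (σ t) - G t (W σ t.castSucc)‖ ^ 2
              + (η * ⟪u t (W σ t.castSucc) (σ t) - G t (W σ t.castSucc), G t (W σ t.castSucc)⟫
                 + ⟪G t (W σ t.castSucc) - u t (W σ t.castSucc) (σ t), W σ t.castSucc - wstar⟫)) :=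
      Finset.sum_le_sum fun σ _ => Finset.sum_le_sum fun t _ => key σ t
    have hsplit : (∑ σ : (s : Fin T) → Fin (n s), ∑ t : Fin T,
            ((‖W σ t.castSucc - wstar‖ ^ 2 - ‖W σ t.succ - wstar‖ ^ 2) / (2 * η)
              + η * ‖u t (W σ t.castSucc) (σ t) - G t (W σ t.castSucc)‖ ^ 2
              + (η * ⟪u t (W σ t.castSucc) (σ t) - G t (W σ t.castSucc), G t (W σ t.castSucc)⟫
                 + ⟪G t (W σ t.castSucc) - u t (W σ t.castSucc) (σ t), W σ t.castSucc - wstar⟫)))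
        = (∑ σ : (s : Fin T) → Fin (n s), ∑ t : Fin T,
            (‖W σ t.castSucc - wstar‖ ^ 2 - ‖W σ t.succ - wstar‖ ^ 2) / (2 * η))
          + (∑ σ : (s : Fin T) → Fin (n s), ∑ t : Fin T,
              η * ‖u t (W σ t.castSucc) (σ t) - G t (W σ t.castSucc)‖ ^ 2)
          + (∑ σ : (s : Fin T) → Fin (n s), ∑ t : Fin T,
              (η * ⟪u t (W σ t.castSucc) (σ t) - G t (W σ t.castSucc), G t (W σ t.castSucc)⟫
                 + ⟪G t (W σ t.castSucc) - u t (W σ t.castSucc) (σ t), W σ t.castSucc - wstar⟫)) := by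
      simp only [Finset.sum_add_distrib]
    have hD : (∑ σ : (s : Fin T) → Fin (n s), ∑ t : Fin T,
          (‖W σ t.castSucc - wstar‖ ^ 2 - ‖W σ t.succ - wstar‖ ^ 2) / (2 * η))
        ≤ (N : ℝ) * (‖wstar‖ ^ 2 / (2 * η)) := by
      have h1 : ∀ σ : (s : Fin T) → Fin (n s),
          (∑ t : Fin T, (‖W σ t.castSucc - wstar‖ ^ 2 - ‖W σ t.succ - wstar‖ ^ 2) / (2 * η))
            ≤ ‖wstar‖ ^ 2 / (2 * η) := by
        intro σ
        rw [← Finset.sum_div]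
        exact div_le_div_of_nonneg_right (Stel σ) (by linarith) |>.trans_eq rfl
      calc (∑ σ : (s : Fin T) → Fin (n s), ∑ t : Fin T,
            (‖W σ t.castSucc - wstar‖ ^ 2 - ‖W σ t.succ - wstar‖ ^ 2) / (2 * η))
          ≤ ∑ _σ : (s : Fin T) → Fin (n s), ‖wstar‖ ^ 2 / (2 * η) :=
            Finset.sum_le_sum fun σ _ => h1 σ
        _ = (N : ℝ) * (‖wstar‖ ^ 2 / (2 * η)) := by
            rw [Finset.sum_const, Finset.card_univ, nsmul_eq_mul]
    have hP : (∑ σ : (s : Fin T) → Fin (n s), ∑ t : Fin T,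
          η * ‖u t (W σ t.castSucc) (σ t) - G t (W σ t.castSucc)‖ ^ 2) = η * Ssum := by
      have h1 : (∑ σ : (s : Fin T) → Fin (n s), ∑ t : Fin T,
          ‖u t (W σ t.castSucc) (σ t) - G t (W σ t.castSucc)‖ ^ 2) = Ssum := by
        calc (∑ σ : (s : Fin T) → Fin (n s), ∑ t : Fin T,
              ‖u t (W σ t.castSucc) (σ t) - G t (W σ t.castSucc)‖ ^ 2)
            = ∑ t : Fin T, ∑ σ : (s : Fin T) → Fin (n s),
                ‖u t (W σ t.castSucc) (σ t) - G t (W σ t.castSucc)‖ ^ 2 := Finset.sum_comm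
          _ = ∑ t : Fin T, ∑ σ : (s : Fin T) → Fin (n s), V t σ :=
              Finset.sum_congr rfl fun t _ => Spsi t
          _ = Ssum := Finset.sum_comm
      calc (∑ σ : (s : Fin T) → Fin (n s), ∑ t : Fin T,
            η * ‖u t (W σ t.castSucc) (σ t) - G t (W σ t.castSucc)‖ ^ 2)
          = η * ∑ σ : (s : Fin T) → Fin (n s), ∑ t : Fin T,
              ‖u t (W σ t.castSucc) (σ t) - G t (W σ t.castSucc)‖ ^ 2 := by
            rw [Finset.mul_sum]
            exact Finset.sum_congr rfl fun σ _ => (Finset.mul_sum _ _ _).symm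
        _ = η * Ssum := by rw [h1]
    have hQ : (∑ σ : (s : Fin T) → Fin (n s), ∑ t : Fin T,
          (η * ⟪u t (W σ t.castSucc) (σ t) - G t (W σ t.castSucc), G t (W σ t.castSucc)⟫
             + ⟪G t (W σ t.castSucc) - u t (W σ t.castSucc) (σ t), W σ t.castSucc - wstar⟫)) = 0 := by
      rw [Finset.sum_comm]
      rw [Finset.sum_congr rfl fun t _ => Sphi t]
      simp
    rw [hsplit, hP, hQ] at step1
    linarith
  have hcoef : (0:ℝ) ≤ 1 / (N : ℝ) := by positivity
  have hmul := mul_le_mul_of_nonneg_left main hcoef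
  refine hmul.trans_eq ?_
  have hNne : (N : ℝ) ≠ 0 := ne_of_gt hNpos
  field_simp
end

section
/- Let E and F be real inner product spaces, M ≥ 0, and let g : E → F satisfy ‖g x − g y‖ ≤ M·‖x − y‖ for all x, y. Let n ≥ 1, x : Fin n → E, and let π : Fin n → Fin k be a cluster assignment with every cluster C j = {i | π i = j} nonempty, n j = |C j|, cluster centroids c j = (1/n j)·Σ_{i∈C j} x i, and per-cluster gradient means ν j = (1/n j)·Σ_{i∈C j} g (x i). Then Σ_j (n j / n)²·(1/n j)·Σ_{i∈C j} ‖g (x i) − ν j‖² ≤ Σ_j (n j·M² / n²)·Σ_{i∈C j} ‖x i − c j‖². (Paper's Equation (6): the variance of the stratified gradient estimator is upper bounded, via M-smoothness of the loss, by a weighted sum of within-cluster squared distances of the inputs to their centroids — the clustering objective minimized by online stratified sampling.) -/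
open scoped RealInnerProductSpace BigOperators

/-- The mean minimizes the sum of squared distances. -/
lemma mean_min_sum_sq {ι F : Type*} [NormedAddCommGroup F] [InnerProductSpace ℝ F]
    (s : Finset ι) (hs : s.Nonempty) (v : ι → F) (a : F) :
    ∑ i ∈ s, ‖v i - (1 / (s.card : ℝ)) • ∑ i ∈ s, v i‖ ^ 2 ≤ ∑ i ∈ s, ‖v i - a‖ ^ 2 := by
  set ν : F := (1 / (s.card : ℝ)) • ∑ i ∈ s, v i with hν
  have hcard : (s.card : ℝ) ≠ 0 := by
    exact_mod_cast Finset.card_ne_zero_of_mem hs.choose_spec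
  have hzero : ∑ i ∈ s, (v i - ν) = 0 := by
    rw [Finset.sum_sub_distrib, Finset.sum_const, hν, ← Nat.cast_smul_eq_nsmul ℝ, smul_smul]
    rw [mul_one_div, div_self hcard, one_smul, sub_self]
  have hexp : ∀ i ∈ s, ‖v i - a‖ ^ 2
      = ‖v i - ν‖ ^ 2 + 2 * ⟪v i - ν, ν - a⟫ + ‖ν - a‖ ^ 2 := by
    intro i _
    have : v i - a = (v i - ν) + (ν - a) := by abel
    rw [this, @norm_add_sq_real]
  rw [Finset.sum_congr rfl hexp]
  rw [Finset.sum_add_distrib, Finset.sum_add_distrib, ← Finset.mul_sum,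
    ← sum_inner, hzero, inner_zero_left, mul_zero, add_zero, Finset.sum_const,
    nsmul_eq_mul]
  have hpos : (0:ℝ) < s.card := by exact_mod_cast Finset.card_pos.mpr hs
  nlinarith [sq_nonneg ‖ν - a‖]

/-- Paper's Equation (6): the variance of the stratified gradient estimator is upper
bounded, via `M`-smoothness of the loss, by a weighted sum of within-cluster squared
distances of the inputs to their centroids — the clustering objective minimized by
online stratified sampling. -/
theorem stratified_variance_clustering_bound
    {E F : Type*} [NormedAddCommGroup E] [InnerProductSpace ℝ E]
    [NormedAddCommGroup F] [InnerProductSpace ℝ F]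
    (M : ℝ) (hM : 0 ≤ M) (g : E → F)
    (hg : ∀ x y : E, ‖g x - g y‖ ≤ M * ‖x - y‖)
    (n k : ℕ) (hn : 1 ≤ n) (x : Fin n → E) (π : Fin n → Fin k)
    (hne : ∀ j : Fin k, ∃ i : Fin n, π i = j)
    (nc : Fin k → ℕ)
    (hnc : ∀ j, nc j = (Finset.univ.filter (fun i : Fin n => π i = j)).card)
    (c : Fin k → E)
    (hc : ∀ j, c j = (1 / (nc j : ℝ)) •
      ∑ i ∈ Finset.univ.filter (fun i : Fin n => π i = j), x i)
    (ν : Fin k → F)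
    (hν : ∀ j, ν j = (1 / (nc j : ℝ)) •
      ∑ i ∈ Finset.univ.filter (fun i : Fin n => π i = j), g (x i)) :
    ∑ j : Fin k, ((nc j : ℝ) / (n : ℝ)) ^ 2 *
        ((1 / (nc j : ℝ)) *
          ∑ i ∈ Finset.univ.filter (fun i : Fin n => π i = j), ‖g (x i) - ν j‖ ^ 2) ≤
      ∑ j : Fin k, ((nc j : ℝ) * M ^ 2 / (n : ℝ) ^ 2) *
        ∑ i ∈ Finset.univ.filter (fun i : Fin n => π i = j), ‖x i - c j‖ ^ 2 := by
  apply Finset.sum_le_sum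
  intro j _
  set s := Finset.univ.filter (fun i : Fin n => π i = j) with hs
  have hsne : s.Nonempty := by
    obtain ⟨i, hi⟩ := hne j
    exact ⟨i, by simp [hs, hi]⟩
  have hncpos : 0 < (nc j : ℝ) := by
    rw [hnc j]
    exact_mod_cast Finset.card_pos.mpr hsne
  have hnpos : 0 < (n : ℝ) := by exact_mod_cast hn
  -- key inequality: ∑ ‖g xi − ν j‖² ≤ M² ∑ ‖xi − c j‖²
  have key : ∑ i ∈ s, ‖g (x i) - ν j‖ ^ 2 ≤ M ^ 2 * ∑ i ∈ s, ‖x i - c j‖ ^ 2 := by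
    calc ∑ i ∈ s, ‖g (x i) - ν j‖ ^ 2
        ≤ ∑ i ∈ s, ‖g (x i) - g (c j)‖ ^ 2 := by
          have := mean_min_sum_sq s hsne (fun i => g (x i)) (g (c j))
          simpa [hν j, hnc j] using this
      _ ≤ ∑ i ∈ s, M ^ 2 * ‖x i - c j‖ ^ 2 := by
          apply Finset.sum_le_sum
          intro i _
          have h := hg (x i) (c j)
          nlinarith [norm_nonneg (g (x i) - g (c j)), norm_nonneg (x i - c j)]
      _ = M ^ 2 * ∑ i ∈ s, ‖x i - c j‖ ^ 2 := (Finset.mul_sum _ _ _).symm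
  have h1 : ((nc j : ℝ) / (n : ℝ)) ^ 2 * ((1 / (nc j : ℝ)) * ∑ i ∈ s, ‖g (x i) - ν j‖ ^ 2)
      = ((nc j : ℝ) / (n : ℝ) ^ 2) * ∑ i ∈ s, ‖g (x i) - ν j‖ ^ 2 := by
    field_simp
  have h2 : ((nc j : ℝ) * M ^ 2 / (n : ℝ) ^ 2) * ∑ i ∈ s, ‖x i - c j‖ ^ 2
      = ((nc j : ℝ) / (n : ℝ) ^ 2) * (M ^ 2 * ∑ i ∈ s, ‖x i - c j‖ ^ 2) := by ring
  rw [h1, h2]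
  apply mul_le_mul_of_nonneg_left key
  positivity
end

section
/- Let H be a real inner product space, M ≥ 0, f : H → ℝ, G : H → H, and w* ∈ H such that for all a, b ∈ H, f b ≤ f a + ⟪G a, b − a⟫ + (M/2)·‖b − a‖², and G w* = 0. Let P be a finite index set, a : P → ℝ, and v, v̂ : P → H with ‖v̂ p − v p‖ ≤ δ for all p ∈ P, where δ ≥ 0. If w* = Σ_p (a p)•(v p) and w̄* = Σ_p (a p)•(v̂ p), then f w̄* − f w* ≤ (M/2)·(Σ_p |a p|)²·δ². (Deterministic core of the paper's Theorem 8: if the optimal kernel expansion w* is a stationary point of an M-smooth loss and each kernel section is perturbed by at most δ, then the loss of the perturbed expansion w̄* exceeds the optimum by at most (M/2)·‖w*‖₁²·δ².) -/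
open scoped RealInnerProductSpace BigOperators

/-- Deterministic core of the paper's Theorem 8: if the optimal kernel expansion
`w*` is a stationary point of an `M`-smooth loss and each kernel section is
perturbed by at most `δ`, then the loss of the perturbed expansion `w̄*` exceeds the
optimum by at most `(M/2)·‖w*‖₁²·δ²`. -/
theorem perturbed_expansion_excess_loss
    {H : Type*} [NormedAddCommGroup H] [InnerProductSpace ℝ H]
    (M : ℝ) (hM : 0 ≤ M) (f : H → ℝ) (G : H → H) (wstar : H)
    (hsmooth : ∀ a b : H, f b ≤ f a + ⟪G a, b - a⟫ + (M / 2) * ‖b - a‖ ^ 2)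
    (hstat : G wstar = 0)
    {P : Type*} [Fintype P] (a : P → ℝ) (v vhat : P → H)
    (δ : ℝ) (hδ : 0 ≤ δ) (herr : ∀ p : P, ‖vhat p - v p‖ ≤ δ)
    (hwstar : wstar = ∑ p : P, a p • v p)
    (wbar : H) (hwbar : wbar = ∑ p : P, a p • vhat p) :
    f wbar - f wstar ≤ (M / 2) * (∑ p : P, |a p|) ^ 2 * δ ^ 2 := by
  have hdiff : wbar - wstar = ∑ p : P, a p • (vhat p - v p) := by
    rw [hwbar, hwstar, ← Finset.sum_sub_distrib]
    simp [smul_sub]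
  have hnorm : ‖wbar - wstar‖ ≤ (∑ p : P, |a p|) * δ := by
    rw [hdiff, Finset.sum_mul]
    calc ‖∑ p : P, a p • (vhat p - v p)‖ ≤ ∑ p : P, ‖a p • (vhat p - v p)‖ :=
          norm_sum_le _ _
      _ ≤ ∑ p : P, |a p| * δ := by
          refine Finset.sum_le_sum fun p _ => ?_
          rw [norm_smul, Real.norm_eq_abs]
          exact mul_le_mul_of_nonneg_left (herr p) (abs_nonneg _)
  have h := hsmooth wstar wbar
  rw [hstat] at h
  simp only [inner_zero_left, add_zero, zero_add] at h
  have hsq : ‖wbar - wstar‖ ^ 2 ≤ ((∑ p : P, |a p|) * δ) ^ 2 := by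
    exact pow_le_pow_left₀ (norm_nonneg _) hnorm 2
  nlinarith [norm_nonneg (wbar - wstar)]
end

section
/- Let H be a real inner product space, M ≥ 0, T ≥ 1, w* ∈ H, and for each t ∈ Fin T let f t : H → ℝ and G t : H → H satisfy, for all a, b ∈ H, f t b ≤ f t a + ⟪G t a, b − a⟫ + (M/2)·‖b − a‖², with G t w* = 0. Let P be a finite index set, a : P → ℝ, δ ≥ 0, and v, v̂ : P → H with ‖v̂ p − v p‖ ≤ δ for all p. If w* = Σ_p (a p)•(v p) and w̄* = Σ_p (a p)•(v̂ p), then Σ_{t} (f t w̄* − f t w*) ≤ (M/2)·T·(Σ_p |a p|)²·δ². (Paper's Theorem 8: the cumulative excess loss over T rounds of the random-Fourier-approximated comparator w̄* relative to the optimal comparator w* is at most (M/2)·T·‖w*‖₁²·δ², when the per-round kernel section errors are at most δ.) -/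
open scoped RealInnerProductSpace BigOperators

/-- Paper's Theorem 8: the cumulative excess loss over `T` rounds of the
random-Fourier-approximated comparator `w̄*` relative to the optimal comparator `w*`
is at most `(M/2)·T·‖w*‖₁²·δ²`, when the per-round kernel section errors are at
most `δ`. -/
theorem rff_comparator_cumulative_excess_loss
    {H : Type*} [NormedAddCommGroup H] [InnerProductSpace ℝ H]
    (M : ℝ) (hM : 0 ≤ M) (T : ℕ) (hT : 1 ≤ T) (wstar : H)
    (f : Fin T → H → ℝ) (G : Fin T → H → H)
    (hsmooth : ∀ (t : Fin T) (a b : H),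
      f t b ≤ f t a + ⟪G t a, b - a⟫ + (M / 2) * ‖b - a‖ ^ 2)
    (hstat : ∀ t : Fin T, G t wstar = 0)
    {P : Type*} [Fintype P] (a : P → ℝ)
    (δ : ℝ) (hδ : 0 ≤ δ) (v vhat : P → H)
    (herr : ∀ p : P, ‖vhat p - v p‖ ≤ δ)
    (hwstar : wstar = ∑ p : P, a p • v p)
    (wbar : H) (hwbar : wbar = ∑ p : P, a p • vhat p) :
    ∑ t : Fin T, (f t wbar - f t wstar) ≤
      (M / 2) * (T : ℝ) * (∑ p : P, |a p|) ^ 2 * δ ^ 2 := by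
  have hdiff : wbar - wstar = ∑ p : P, a p • (vhat p - v p) := by
    rw [hwbar, hwstar, ← Finset.sum_sub_distrib]
    simp [smul_sub]
  have hnorm : ‖wbar - wstar‖ ≤ (∑ p : P, |a p|) * δ := by
    rw [hdiff]
    calc ‖∑ p : P, a p • (vhat p - v p)‖ ≤ ∑ p : P, ‖a p • (vhat p - v p)‖ :=
          norm_sum_le _ _
      _ ≤ ∑ p : P, |a p| * δ := by
          refine Finset.sum_le_sum fun p _ => ?_
          rw [norm_smul, Real.norm_eq_abs]
          exact mul_le_mul_of_nonneg_left (herr p) (abs_nonneg _)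
      _ = (∑ p : P, |a p|) * δ := by rw [← Finset.sum_mul]
  have hsum : 0 ≤ ∑ p : P, |a p| := Finset.sum_nonneg fun p _ => abs_nonneg _
  have hsq : ‖wbar - wstar‖ ^ 2 ≤ (∑ p : P, |a p|) ^ 2 * δ ^ 2 := by
    rw [← mul_pow]
    exact pow_le_pow_left₀ (norm_nonneg _) hnorm 2
  have hbd : ∀ t : Fin T, f t wbar - f t wstar ≤
      (M / 2) * ((∑ p : P, |a p|) ^ 2 * δ ^ 2) := by
    intro t
    have := hsmooth t wstar wbar
    rw [hstat t] at this
    simp only [inner_zero_left, add_zero] at this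
    have h2 : (M / 2) * ‖wbar - wstar‖ ^ 2 ≤
        (M / 2) * ((∑ p : P, |a p|) ^ 2 * δ ^ 2) :=
      mul_le_mul_of_nonneg_left hsq (by positivity)
    linarith
  calc ∑ t : Fin T, (f t wbar - f t wstar)
      ≤ ∑ _t : Fin T, (M / 2) * ((∑ p : P, |a p|) ^ 2 * δ ^ 2) :=
        Finset.sum_le_sum fun t _ => hbd t
    _ = (M / 2) * (T : ℝ) * (∑ p : P, |a p|) ^ 2 * δ ^ 2 := by
        simp [Finset.sum_const]; ring
end
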